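/- Let B₀ be a closed ball in ℝ^d and fix t, K, c > 0 and δ ≥ 0. Then the set of pairs (x, ν) ∈ B₀ × P(B₀) such that (x, ν) have (t, K, c, δ)-thin tubes is compact in the product of B₀ with the weak topology on probability measures. Here (x, ν) have (t, K, c, δ)-thin tubes if there exists a Borel measure ν' absolutely continuous with respect to ν with density bounded by 1, total mass at least c, and ν'(T) ≤ K r^t for every open r-tube T through x with r > δ. -/

import Mathlib

open MeasureTheory Metric Filter Topology BoundedContinuousFunction TopologicalSpace
open scoped ENNReal

/-- `T` is an open `r`-tube through `x`: the open `r`-neighborhood of a line through `x`. -/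
def IsTube {F : Type*} [NormedAddCommGroup F] [NormedSpace ℝ F]
    (r : ℝ) (x : F) (T : Set F) : Prop :=
  ∃ v : F, v ≠ 0 ∧ T = Metric.thickening r {y | ∃ t : ℝ, y = x + t • v}

/-- `(x, ν)` have `(t, K, c, δ)`-thin tubes: there is a measure `ν' ≪ ν` with density
bounded by `1`, total mass at least `c`, and `ν'(T) ≤ K r^t` for all open `r`-tubes `T`
through `x` with `r > δ`. -/
def HasThinTubesPt {F : Type*} [NormedAddCommGroup F] [NormedSpace ℝ F]
    [MeasurableSpace F] (x : F) (ν : Measure F) (t K c δ : ℝ) : Prop :=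
  ∃ ν' : Measure F, ν' ≤ ν ∧ ENNReal.ofReal c ≤ ν' Set.univ ∧
    ∀ (r : ℝ) (T : Set F), δ < r → IsTube r x T → ν' T ≤ ENNReal.ofReal (K * r ^ t)


lemma ultrafilter_exists_tendsto {ι : Type*} (𝒰 : Ultrafilter ι) {g : ι → ℝ} {a b : ℝ}
    (h : ∀ i, g i ∈ Set.Icc a b) : ∃ L, L ∈ Set.Icc a b ∧ Tendsto g 𝒰 (𝓝 L) := by
  obtain ⟨L, hL, hle⟩ := (isCompact_Icc (a := a) (b := b)).ultrafilter_le_nhds (𝒰.map g)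
    (by rw [Filter.le_principal_iff]; exact Filter.mem_map.mpr (Filter.Eventually.of_forall h))
  exact ⟨L, hL, hle⟩

lemma riemann_aux {Ω : Type*} [MeasurableSpace Ω] [TopologicalSpace Ω] [OpensMeasurableSpace Ω]
    (ν : Measure Ω) [IsProbabilityMeasure ν] (f : Ω →ᵇ ℝ) (f_nn : ∀ x, 0 ≤ f x)
    {ε : ℝ} (hε : 0 < ε) (N : ℕ) (hN : ‖f‖ ≤ N * ε) :
    ε * ∑ j ∈ Finset.Icc 1 N, (ν {x | (j:ℝ) * ε ≤ f x}).toReal ≤ ∫ x, f x ∂ν ∧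
    ∫ x, f x ∂ν ≤ ε + ε * ∑ j ∈ Finset.Icc 1 N, (ν {x | (j:ℝ) * ε ≤ f x}).toReal := by
  have hmeas : ∀ j : ℕ, MeasurableSet {x : Ω | (j:ℝ) * ε ≤ f x} := fun j =>
    (isClosed_le continuous_const f.continuous).measurableSet
  set g : Ω → ℝ := fun x => ∑ j ∈ Finset.Icc 1 N,
    Set.indicator {x : Ω | (j:ℝ) * ε ≤ f x} (fun _ => ε) x with hg
  have hg_int : Integrable g ν :=
    integrable_finset_sum _ fun j _ => (integrable_const ε).indicator (hmeas j)
  have hg_integral : ∫ x, g x ∂ν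
      = ε * ∑ j ∈ Finset.Icc 1 N, (ν {x | (j:ℝ) * ε ≤ f x}).toReal := by
    rw [hg, integral_finset_sum _ (fun j _ => (integrable_const ε).indicator (hmeas j))]
    rw [Finset.mul_sum]
    refine Finset.sum_congr rfl fun j _ => ?_
    rw [integral_indicator_const _ (hmeas j), smul_eq_mul, mul_comm, measureReal_def]
  -- pointwise formula
  have hgval : ∀ x : Ω, g x = ε * (min N (Nat.floor (f x / ε)) : ℕ) := by
    intro x
    have hnn : 0 ≤ f x / ε := div_nonneg (f_nn x) hε.le
    have : ∀ j : ℕ, x ∈ {x : Ω | (j:ℝ) * ε ≤ f x} ↔ j ≤ Nat.floor (f x / ε) := by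
      intro j
      rw [Set.mem_setOf_eq, Nat.le_floor_iff hnn, le_div_iff₀ hε]
    rw [hg]
    simp only [Set.indicator_apply]
    rw [Finset.sum_congr rfl (fun j _ => by rw [if_congr (by rw [this j]) rfl rfl])]
    rw [Finset.sum_ite, Finset.sum_const, Finset.sum_const, smul_zero, add_zero]
    have : Finset.filter (fun j => j ≤ Nat.floor (f x / ε)) (Finset.Icc 1 N)
        = Finset.Icc 1 (min N (Nat.floor (f x / ε))) := by
      ext j
      simp only [Finset.mem_filter, Finset.mem_Icc, le_min_iff]
      tauto
    rw [this, Nat.card_Icc]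
    simp [nsmul_eq_mul, mul_comm]
  have hg_le_f : ∀ x, g x ≤ f x := by
    intro x
    rw [hgval x]
    have h1 : ((min N (Nat.floor (f x / ε)) : ℕ) : ℝ) ≤ (Nat.floor (f x / ε) : ℕ) := by
      exact_mod_cast Nat.cast_le.mpr (min_le_right _ _)
    have h2 : ((Nat.floor (f x / ε) : ℕ) : ℝ) ≤ f x / ε :=
      Nat.floor_le (div_nonneg (f_nn x) hε.le)
    calc ε * ((min N (Nat.floor (f x / ε)) : ℕ) : ℝ) ≤ ε * (f x / ε) := by
          exact mul_le_mul_of_nonneg_left (h1.trans h2) hε.le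
      _ = f x := by field_simp
  have hf_le_g : ∀ x, f x ≤ g x + ε := by
    intro x
    rw [hgval x]
    rcases le_or_gt (Nat.floor (f x / ε)) N with hc | hc
    · rw [min_eq_right hc]
      have := Nat.lt_floor_add_one (f x / ε)
      have h3 : f x / ε < (Nat.floor (f x / ε) : ℝ) + 1 := this
      have := (div_lt_iff₀ hε).mp h3
      nlinarith
    · rw [min_eq_left hc.le]
      have h4 : f x ≤ ‖f‖ := (le_abs_self _).trans (f.norm_coe_le_norm x)
      have : ‖f‖ ≤ ε * N := by rw [mul_comm]; exact hN
      nlinarith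
  constructor
  · rw [← hg_integral]
    exact integral_mono hg_int (f.integrable ν) hg_le_f
  · have : ∫ x, f x ∂ν ≤ ∫ x, (g x + ε) ∂ν :=
      integral_mono (f.integrable ν) (hg_int.add (integrable_const ε)) hf_le_g
    rwa [integral_add hg_int (integrable_const ε), integral_const, probReal_univ,
      one_smul, hg_integral, add_comm] at this

lemma exists_limit_measure {X : Type*} [TopologicalSpace X] [T2Space X]
    [MeasurableSpace X] [BorelSpace X]
    {ι : Type*} (𝒰 : Ultrafilter ι) (ms : ι → Measure X)
    (hms1 : ∀ i, ms i Set.univ ≤ 1) :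
    ∃ (μ : Measure X) (m : Set X → ℝ),
      (∀ A, Tendsto (fun i => (ms i A).toReal) 𝒰 (𝓝 (m A))) ∧
      (∀ A, m A ∈ Set.Icc (0:ℝ) 1) ∧
      (∀ s : Set X, MeasurableSet s →
        μ s = ⨅ (U : Set X) (hU : IsOpen U) (_ : s ⊆ U),
          ⨆ (Kc : Compacts X) (_ : (Kc : Set X) ⊆ U), ENNReal.ofReal (m Kc)) ∧
      (∀ (U : Set X), IsOpen U → μ U = ⨆ (Kc : Compacts X) (_ : (Kc : Set X) ⊆ U),
          ENNReal.ofReal (m Kc)) ∧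
      (∀ Kc : Compacts X, ENNReal.ofReal (m (Kc : Set X)) ≤ μ (Kc : Set X)) := by
  have hne : ∀ i (A : Set X), ms i A ≠ ∞ := fun i A =>
    (((measure_mono (Set.subset_univ A)).trans (hms1 i)).trans_lt ENNReal.one_lt_top).ne
  have hbd : ∀ (A : Set X) i, (ms i A).toReal ∈ Set.Icc (0:ℝ) 1 := by
    intro A i
    refine ⟨ENNReal.toReal_nonneg, ?_⟩
    have : (ms i A).toReal ≤ ((1 : ℝ≥0∞)).toReal :=
      ENNReal.toReal_mono ENNReal.one_ne_top
        ((measure_mono (Set.subset_univ A)).trans (hms1 i))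
    simpa using this
  choose m hm hmt using fun A : Set X => ultrafilter_exists_tendsto 𝒰 (hbd A)
  have hmono : ∀ A B : Set X, A ⊆ B → m A ≤ m B := by
    intro A B hAB
    refine le_of_tendsto_of_tendsto' (hmt A) (hmt B) fun i => ?_
    exact ENNReal.toReal_mono (hne i B) (measure_mono hAB)
  have hadd : ∀ K₁ K₂ : Compacts X, Disjoint (K₁ : Set X) (K₂ : Set X) →
      m ((K₁ : Set X) ∪ K₂) = m K₁ + m K₂ := by
    intro K₁ K₂ hdisj
    refine tendsto_nhds_unique (hmt _) (Tendsto.congr (fun i => ?_) ((hmt K₁).add (hmt K₂)))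
    rw [← ENNReal.toReal_add (hne i _) (hne i _),
      ← measure_union hdisj K₂.isCompact.isClosed.measurableSet]
  have hsub : ∀ K₁ K₂ : Compacts X, m ((K₁ : Set X) ∪ K₂) ≤ m K₁ + m K₂ := by
    intro K₁ K₂
    refine le_of_tendsto_of_tendsto' (hmt _) ((hmt K₁).add (hmt K₂)) fun i => ?_
    calc (ms i ((K₁ : Set X) ∪ K₂)).toReal
        ≤ (ms i K₁ + ms i K₂).toReal :=
          ENNReal.toReal_mono (ENNReal.add_ne_top.mpr ⟨hne i _, hne i _⟩) (measure_union_le _ _)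
      _ = (ms i K₁).toReal + (ms i K₂).toReal := ENNReal.toReal_add (hne i _) (hne i _)
  set C : Content X :=
    { toFun := fun Kc => Real.toNNReal (m Kc)
      mono' := fun K₁ K₂ h => Real.toNNReal_mono (hmono _ _ h)
      sup_disjoint' := by
        intro K₁ K₂ hdisj _ _
        simp only [Compacts.coe_sup]
        rw [hadd K₁ K₂ hdisj, Real.toNNReal_add (hm K₁).1 (hm K₂).1]
      sup_le' := by
        intro K₁ K₂
        simp only [Compacts.coe_sup]
        refine (Real.toNNReal_mono (hsub K₁ K₂)).trans ?_
        rw [Real.toNNReal_add (hm K₁).1 (hm K₂).1] } with hC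
  have hCK : ∀ Kc : Compacts X, (C Kc : ℝ≥0∞) = ENNReal.ofReal (m Kc) := fun Kc => rfl
  refine ⟨C.measure, m, hmt, hm, ?_, ?_, ?_⟩
  · intro s hs
    rw [C.measure_apply hs]
    exact C.outerMeasure_eq_iInf s
  · intro U hU
    rw [C.measure_apply hU.measurableSet, C.outerMeasure_of_isOpen U hU, Content.innerContent]
    exact rfl
  · intro Kc
    rw [C.measure_apply Kc.isCompact.isClosed.measurableSet, ← hCK]
    exact C.le_outerMeasure_compacts Kc


theorem thinTubes_set_isCompact (d : ℕ) (x₀ : EuclideanSpace ℝ (Fin d)) (R : ℝ)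
    (hR : 0 < R) (t K c δ : ℝ) (ht : 0 < t) (hK : 0 < K) (hc : 0 < c) (hδ : 0 ≤ δ) :
    IsCompact {p : (EuclideanSpace ℝ (Fin d)) × ProbabilityMeasure (EuclideanSpace ℝ (Fin d)) |
      p.1 ∈ Metric.closedBall x₀ R ∧
      (p.2 : Measure (EuclideanSpace ℝ (Fin d))) (Metric.closedBall x₀ R)ᶜ = 0 ∧
      HasThinTubesPt p.1 (p.2 : Measure (EuclideanSpace ℝ (Fin d))) t K c δ} := by
  classical
  set B : Set (EuclideanSpace ℝ (Fin d)) := Metric.closedBall x₀ R with hBdef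
  rw [isCompact_iff_ultrafilter_le_nhds]
  intro 𝒰 hle
  rw [Filter.le_principal_iff] at hle
  have hS : ∀ᶠ p in (𝒰 : Filter ((EuclideanSpace ℝ (Fin d)) × ProbabilityMeasure (EuclideanSpace ℝ (Fin d)))), p.1 ∈ B ∧ (p.2 : Measure (EuclideanSpace ℝ (Fin d))) Bᶜ = 0 ∧
      HasThinTubesPt p.1 (p.2 : Measure (EuclideanSpace ℝ (Fin d))) t K c δ := hle
  -- choose the auxiliary measures
  obtain ⟨σ, hσuniv, hσle, hσc, hσtube⟩ :
      ∃ σ : (EuclideanSpace ℝ (Fin d)) × ProbabilityMeasure (EuclideanSpace ℝ (Fin d)) →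
        Measure (EuclideanSpace ℝ (Fin d)),
        (∀ p, σ p Set.univ ≤ 1) ∧
        (∀ p, HasThinTubesPt p.1 (p.2 : Measure _) t K c δ → σ p ≤ (p.2 : Measure _)) ∧
        (∀ p, HasThinTubesPt p.1 (p.2 : Measure _) t K c δ → ENNReal.ofReal c ≤ σ p Set.univ) ∧
        (∀ p, HasThinTubesPt p.1 (p.2 : Measure _) t K c δ → ∀ (r : ℝ)
          (T : Set (EuclideanSpace ℝ (Fin d))), δ < r →
          IsTube r p.1 T → σ p T ≤ ENNReal.ofReal (K * r ^ t)) := by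
    refine ⟨fun p => if h : HasThinTubesPt p.1 (p.2 : Measure _) t K c δ then h.choose else 0,
      ?_, ?_, ?_, ?_⟩
    · intro p
      by_cases h : HasThinTubesPt p.1 (p.2 : Measure _) t K c δ
      · simp only [dif_pos h]
        refine (Measure.le_iff'.mp h.choose_spec.1 Set.univ).trans ?_
        simp [measure_univ]
      · simp [dif_neg h]
    · intro p h; simp only [dif_pos h]; exact h.choose_spec.1
    · intro p h; simp only [dif_pos h]; exact h.choose_spec.2.1
    · intro p h; simp only [dif_pos h]; exact h.choose_spec.2.2
  have hσne : ∀ p (A : Set (EuclideanSpace ℝ (Fin d))), σ p A ≠ ∞ := fun p A =>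
    (((measure_mono (Set.subset_univ A)).trans (hσuniv p)).trans_lt ENNReal.one_lt_top).ne
  -- limit measures
  obtain ⟨μM, m, hmt, hmIcc, hμinf, hμopen, hμK⟩ := exists_limit_measure 𝒰
    (fun p : (EuclideanSpace ℝ (Fin d)) × ProbabilityMeasure (EuclideanSpace ℝ (Fin d)) =>
      (p.2 : Measure (EuclideanSpace ℝ (Fin d)))) (fun p => by simp [measure_univ])
  obtain ⟨νM, m', hmt', hmIcc', hνinf, hνopen, hνK⟩ := exists_limit_measure 𝒰 σ
    (fun p => hσuniv p)
  -- limit of the points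
  obtain ⟨x, hxB, hxt⟩ := (isCompact_closedBall x₀ R).ultrafilter_le_nhds (𝒰.map Prod.fst)
    (by
      rw [Filter.le_principal_iff]
      exact Filter.mem_map.mpr ((hS.mono fun p hp => hp.1) : _))
  have hxt' : Tendsto Prod.fst (𝒰 : Filter ((EuclideanSpace ℝ (Fin d)) × ProbabilityMeasure (EuclideanSpace ℝ (Fin d)))) (𝓝 x) := hxt
  -- basic facts
  have hmB : m B = 1 := by
    refine tendsto_nhds_unique ((hmt B).congr' ?_) tendsto_const_nhds
    filter_upwards [hS] with p hp
    have h1 : (p.2 : Measure _) B = 1 := by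
      have h2 := measure_add_measure_compl (μ := (p.2 : Measure _))
        (measurableSet_closedBall (x := x₀) (ε := R))
      rw [hp.2.1, add_zero, measure_univ] at h2
      exact h2
    simp [h1]
  have hmF : ∀ F : Set (EuclideanSpace ℝ (Fin d)), IsClosed F → m F = m (F ∩ B) := by
    intro F hF
    refine tendsto_nhds_unique (hmt F) ((hmt (F ∩ B)).congr' ?_)
    filter_upwards [hS] with p hp
    have h1 : (p.2 : Measure _) F = (p.2 : Measure _) (F ∩ B) := by
      refine le_antisymm ?_ (measure_mono Set.inter_subset_left)
      calc (p.2 : Measure _) F ≤ (p.2 : Measure _) (F ∩ B) + (p.2 : Measure _) (F \ B) :=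
            measure_le_inter_add_diff _ _ _
        _ ≤ (p.2 : Measure _) (F ∩ B) + (p.2 : Measure _) Bᶜ := by
            gcongr; exact Set.diff_subset_compl F B
        _ = (p.2 : Measure _) (F ∩ B) := by rw [hp.2.1, add_zero]
    rw [h1]
  have hclosed : ∀ F : Set (EuclideanSpace ℝ (Fin d)), IsClosed F →
      ENNReal.ofReal (m F) ≤ μM F := by
    intro F hF
    have hK1 : IsCompact (F ∩ B) := (isCompact_closedBall x₀ R).inter_left hF
    rw [hmF F hF]
    calc ENNReal.ofReal (m (F ∩ B)) ≤ μM ((⟨F ∩ B, hK1⟩ : Compacts _) : Set _) :=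
          hμK ⟨F ∩ B, hK1⟩
      _ ≤ μM F := measure_mono Set.inter_subset_left
  -- μM is a probability measure
  have hμuniv : μM Set.univ = 1 := by
    rw [hμopen Set.univ isOpen_univ]
    apply le_antisymm
    · refine iSup_le fun Kc => iSup_le fun _ => ?_
      rw [show (1 : ℝ≥0∞) = ENNReal.ofReal 1 by simp]
      exact ENNReal.ofReal_le_ofReal (hmIcc Kc).2
    · refine le_trans ?_ (le_iSup_of_le ⟨B, isCompact_closedBall x₀ R⟩
        (le_iSup_of_le (Set.subset_univ _) le_rfl))
      rw [show m ((⟨B, isCompact_closedBall x₀ R⟩ : Compacts _) : Set _) = 1 from hmB]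
      simp
  haveI hμprob : IsProbabilityMeasure μM := ⟨hμuniv⟩
  -- μM is supported on B
  have hμsupp : μM Bᶜ = 0 := by
    rw [hμopen Bᶜ (Metric.isClosed_closedBall).isOpen_compl]
    refine le_antisymm (iSup_le fun Kc => iSup_le fun hKc => ?_) zero_le
    have hmz : m (Kc : Set _) = 0 := by
      refine le_antisymm ?_ (hmIcc _).1
      refine le_of_tendsto_of_tendsto (hmt Kc) tendsto_const_nhds ?_
      filter_upwards [hS] with p hp
      have h0 : (p.2 : Measure (EuclideanSpace ℝ (Fin d))) (Kc : Set (EuclideanSpace ℝ (Fin d))) = 0 :=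
        le_antisymm ((measure_mono hKc).trans (le_of_eq hp.2.1)) zero_le
      simp [h0]
    simp [hmz]
  -- νM ≤ μM
  have hm'le : ∀ A : Set (EuclideanSpace ℝ (Fin d)), m' A ≤ m A := by
    intro A
    refine le_of_tendsto_of_tendsto (hmt' A) (hmt A) ?_
    filter_upwards [hS] with p hp
    exact ENNReal.toReal_mono (measure_ne_top _ A) (Measure.le_iff'.mp (hσle p hp.2.2) A)
  have hνleμ : νM ≤ μM := by
    rw [Measure.le_iff]
    intro s hs
    rw [hνinf s hs, hμinf s hs]
    refine iInf_mono fun U => iInf_mono fun hU => iInf_mono fun hsU => ?_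
    exact iSup_mono fun Kc => iSup_mono fun _ => ENNReal.ofReal_le_ofReal (hm'le Kc)
  -- mass of νM
  have hνmass : ENNReal.ofReal c ≤ νM Set.univ := by
    have hm'B : c ≤ m' B := by
      refine le_of_tendsto_of_tendsto tendsto_const_nhds (hmt' B) ?_
      filter_upwards [hS] with p hp
      have h0 : σ p Bᶜ = 0 :=
        le_antisymm ((Measure.le_iff'.mp (hσle p hp.2.2) Bᶜ).trans (le_of_eq hp.2.1)) zero_le
      have huniv : σ p Set.univ = σ p B := by
        have h2 := measure_add_measure_compl (μ := σ p)
          (measurableSet_closedBall (x := x₀) (ε := R))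
        rw [h0, add_zero] at h2
        exact h2.symm
      have h3 := hσc p hp.2.2
      rw [huniv] at h3
      calc c = (ENNReal.ofReal c).toReal := by rw [ENNReal.toReal_ofReal hc.le]
        _ ≤ (σ p B).toReal := ENNReal.toReal_mono (hσne p B) h3
    calc ENNReal.ofReal c ≤ ENNReal.ofReal (m' B) := ENNReal.ofReal_le_ofReal hm'B
      _ ≤ νM ((⟨B, isCompact_closedBall x₀ R⟩ : Compacts _) : Set _) :=
          hνK ⟨B, isCompact_closedBall x₀ R⟩
      _ ≤ νM Set.univ := measure_mono (Set.subset_univ _)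
  -- tube bound for νM
  have hνtube : ∀ (r : ℝ) (T : Set (EuclideanSpace ℝ (Fin d))), δ < r → IsTube r x T →
      νM T ≤ ENNReal.ofReal (K * r ^ t) := by
    rintro r T hr ⟨v, hv, rfl⟩
    set L : Set (EuclideanSpace ℝ (Fin d)) := {y | ∃ τ : ℝ, y = x + τ • v} with hLdef
    have hLne : L.Nonempty := ⟨x, 0, by simp⟩
    rw [hνopen _ isOpen_thickening]
    refine iSup_le fun Kc => iSup_le fun hKc => ?_
    rcases Set.eq_empty_or_nonempty (Kc : Set (EuclideanSpace ℝ (Fin d))) with hKe | hKne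
    · have hmz : m' (Kc : Set _) = 0 := by
        refine le_antisymm ?_ (hmIcc' _).1
        refine le_of_tendsto_of_tendsto (hmt' _) tendsto_const_nhds
          (Eventually.of_forall fun p => ?_)
        simp [hKe]
      simp [hmz]
    · obtain ⟨y₀, hy₀K, hy₀max⟩ := Kc.isCompact.exists_isMaxOn hKne
        (Metric.continuous_infDist_pt L).continuousOn
      have hy₀ : Metric.infDist y₀ L < r := by
        rw [← Metric.mem_thickening_iff_infDist_lt hLne]
        exact hKc hy₀K
      set a := Metric.infDist y₀ L with ha
      set s := (max a δ + r) / 2 with hs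
      have hmaxlt : max a δ < r := max_lt hy₀ hr
      have hslt : s < r := by rw [hs]; linarith
      have hsgt : max a δ < s := by rw [hs]; linarith
      set ε := (r - s) / 2 with hε
      have hεpos : 0 < ε := by rw [hε]; linarith
      have hsε : s + ε < r := by rw [hε]; linarith
      have hsεδ : δ < s + ε := by
        have h4 : δ ≤ max a δ := le_max_right _ _
        linarith
      have hKsub : (Kc : Set _) ⊆ Metric.thickening s L := by
        intro y hy
        rw [Metric.mem_thickening_iff_infDist_lt hLne]
        exact lt_of_le_of_lt ((hy₀max hy).trans (le_max_left a δ)) hsgt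
      have hbase : (0 : ℝ) ≤ s + ε := le_trans hδ hsεδ.le
      have hbound : m' (Kc : Set _) ≤ K * (s + ε) ^ t := by
        refine le_of_tendsto_of_tendsto (hmt' _) tendsto_const_nhds ?_
        have hxev : ∀ᶠ p in (𝒰 : Filter ((EuclideanSpace ℝ (Fin d)) × ProbabilityMeasure (EuclideanSpace ℝ (Fin d)))), dist p.1 x < ε :=
          hxt' (Metric.ball_mem_nhds x hεpos)
        filter_upwards [hS, hxev] with p hp hpx
        have hsub2 : (Kc : Set _) ⊆
            Metric.thickening (s + ε) {y | ∃ τ : ℝ, y = p.1 + τ • v} := by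
          intro y hy
          obtain ⟨z, hzL, hdz⟩ := Metric.mem_thickening_iff.mp (hKsub hy)
          obtain ⟨τ, rfl⟩ := hzL
          refine Metric.mem_thickening_iff.mpr ⟨p.1 + τ • v, ⟨τ, rfl⟩, ?_⟩
          have hd2 : dist (x + τ • v) (p.1 + τ • v) = dist x p.1 := dist_add_right x p.1 (τ • v)
          calc dist y (p.1 + τ • v) ≤ dist y (x + τ • v) + dist (x + τ • v) (p.1 + τ • v) :=
                dist_triangle _ _ _
            _ < s + ε := by
                rw [hd2]
                have h5 : dist x p.1 < ε := by rw [dist_comm]; exact hpx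
                linarith
        have h6 := hσtube p hp.2.2 (s + ε) _ hsεδ ⟨v, hv, rfl⟩
        have hσK := (measure_mono hsub2).trans h6
        calc (σ p (Kc : Set _)).toReal
            ≤ (ENNReal.ofReal (K * (s + ε) ^ t)).toReal :=
              ENNReal.toReal_mono ENNReal.ofReal_ne_top hσK
          _ = K * (s + ε) ^ t := ENNReal.toReal_ofReal
              (mul_nonneg hK.le (Real.rpow_nonneg hbase t))
      refine le_trans (ENNReal.ofReal_le_ofReal hbound) (ENNReal.ofReal_le_ofReal ?_)
      exact mul_le_mul_of_nonneg_left (Real.rpow_le_rpow hbase hsε.le ht.le) hK.le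
  -- the limit probability measure
  set μP : ProbabilityMeasure (EuclideanSpace ℝ (Fin d)) := ⟨μM, hμprob⟩ with hμP
  -- weak convergence of the second coordinates
  have hconv : Tendsto (fun p : (EuclideanSpace ℝ (Fin d)) ×
      ProbabilityMeasure (EuclideanSpace ℝ (Fin d)) => p.2) (𝒰 : Filter ((EuclideanSpace ℝ (Fin d)) × ProbabilityMeasure (EuclideanSpace ℝ (Fin d)))) (𝓝 μP) := by
    rw [ProbabilityMeasure.tendsto_iff_forall_integral_tendsto]
    intro f
    have hbd : ∀ p : (EuclideanSpace ℝ (Fin d)) × ProbabilityMeasure (EuclideanSpace ℝ (Fin d)),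
        (∫ ω, f ω ∂(p.2 : Measure _)) ∈ Set.Icc (-‖f‖) ‖f‖ := by
      intro p
      have h7 : ‖∫ ω, f ω ∂(p.2 : Measure _)‖ ≤ ‖f‖ := by
        refine (norm_integral_le_of_norm_le_const (C := ‖f‖) ?_).trans (by simp [measure_univ])
        exact Eventually.of_forall fun ω => f.norm_coe_le_norm ω
      rw [Real.norm_eq_abs, abs_le] at h7
      exact ⟨h7.1, h7.2⟩
    obtain ⟨Lf, hLmem, hLt⟩ := ultrafilter_exists_tendsto 𝒰 hbd
    have oneside : ∀ (g : (EuclideanSpace ℝ (Fin d)) →ᵇ ℝ) (Lg : ℝ),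
        Tendsto (fun p : (EuclideanSpace ℝ (Fin d)) ×
          ProbabilityMeasure (EuclideanSpace ℝ (Fin d)) => ∫ ω, g ω ∂(p.2 : Measure _))
          (𝒰 : Filter ((EuclideanSpace ℝ (Fin d)) × ProbabilityMeasure (EuclideanSpace ℝ (Fin d)))) (𝓝 Lg) → Lg ≤ ∫ ω, g ω ∂μM := by
      intro g Lg hLg
      set g' : (EuclideanSpace ℝ (Fin d)) →ᵇ ℝ := g + BoundedContinuousFunction.const _ ‖g‖
        with hg'def
      have hg'app : ∀ ω, g' ω = g ω + ‖g‖ := fun ω => rfl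
      have hg'nn : ∀ ω, 0 ≤ g' ω := by
        intro ω
        rw [hg'app]
        have := g.norm_coe_le_norm ω
        rw [Real.norm_eq_abs, abs_le] at this
        linarith [this.1]
      have hint : ∀ ν : Measure (EuclideanSpace ℝ (Fin d)), IsProbabilityMeasure ν →
          ∫ ω, g' ω ∂ν = (∫ ω, g ω ∂ν) + ‖g‖ := by
        intro ν hν
        simp only [hg'app]
        rw [integral_add (g.integrable ν) (integrable_const _), integral_const]
        simp
      have hLg' : Tendsto (fun p : (EuclideanSpace ℝ (Fin d)) ×
          ProbabilityMeasure (EuclideanSpace ℝ (Fin d)) => ∫ ω, g' ω ∂(p.2 : Measure _))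
          (𝒰 : Filter ((EuclideanSpace ℝ (Fin d)) × ProbabilityMeasure (EuclideanSpace ℝ (Fin d)))) (𝓝 (Lg + ‖g‖)) := by
        refine Tendsto.congr (fun p => ?_) (hLg.add tendsto_const_nhds)
        exact (hint _ inferInstance).symm
      have key : ∀ ε : ℝ, 0 < ε → Lg + ‖g‖ ≤ ε + ∫ ω, g' ω ∂μM := by
        intro ε hε
        set N := Nat.ceil (‖g'‖ / ε) with hNdef
        have hNε : ‖g'‖ ≤ N * ε := by
          rw [← div_le_iff₀ hε]
          exact Nat.le_ceil _
        have hub : ∀ᶠ p in (𝒰 : Filter ((EuclideanSpace ℝ (Fin d)) × ProbabilityMeasure (EuclideanSpace ℝ (Fin d)))), ∫ ω, g' ω ∂(p.2 : Measure _) ≤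
            ε + ε * ∑ j ∈ Finset.Icc 1 N,
              ((p.2 : Measure _) {ω | (j : ℝ) * ε ≤ g' ω}).toReal :=
          Eventually.of_forall fun p => (riemann_aux _ g' hg'nn hε N hNε).2
        have hRt : Tendsto (fun p : (EuclideanSpace ℝ (Fin d)) ×
            ProbabilityMeasure (EuclideanSpace ℝ (Fin d)) =>
            ε + ε * ∑ j ∈ Finset.Icc 1 N,
              ((p.2 : Measure _) {ω | (j : ℝ) * ε ≤ g' ω}).toReal)
            (𝒰 : Filter ((EuclideanSpace ℝ (Fin d)) × ProbabilityMeasure (EuclideanSpace ℝ (Fin d))))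
            (𝓝 (ε + ε * ∑ j ∈ Finset.Icc 1 N, m {ω | (j : ℝ) * ε ≤ g' ω})) :=
          tendsto_const_nhds.add
            (tendsto_const_nhds.mul (tendsto_finset_sum _ fun j _ => hmt _))
        have h1 : Lg + ‖g‖ ≤ ε + ε * ∑ j ∈ Finset.Icc 1 N, m {ω | (j : ℝ) * ε ≤ g' ω} :=
          le_of_tendsto_of_tendsto hLg' hRt hub
        have h2 : ∀ j : ℕ, m {ω | (j : ℝ) * ε ≤ g' ω} ≤
            (μM {ω | (j : ℝ) * ε ≤ g' ω}).toReal := by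
          intro j
          have hFc : IsClosed {ω : EuclideanSpace ℝ (Fin d) | (j : ℝ) * ε ≤ g' ω} :=
            isClosed_le continuous_const g'.continuous
          have h8 := hclosed _ hFc
          calc m {ω | (j : ℝ) * ε ≤ g' ω}
              = (ENNReal.ofReal (m {ω | (j : ℝ) * ε ≤ g' ω})).toReal :=
                (ENNReal.toReal_ofReal (hmIcc _).1).symm
            _ ≤ (μM {ω | (j : ℝ) * ε ≤ g' ω}).toReal :=
                ENNReal.toReal_mono (measure_ne_top _ _) h8
        have h3 : ε * ∑ j ∈ Finset.Icc 1 N, m {ω | (j : ℝ) * ε ≤ g' ω}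
            ≤ ε * ∑ j ∈ Finset.Icc 1 N, (μM {ω | (j : ℝ) * ε ≤ g' ω}).toReal :=
          mul_le_mul_of_nonneg_left (Finset.sum_le_sum fun j _ => h2 j) hε.le
        have h4 := (riemann_aux μM g' hg'nn hε N hNε).1
        linarith
      have h9 : Lg + ‖g‖ ≤ ∫ ω, g' ω ∂μM := by
        by_contra hcon
        push_neg at hcon
        have hε2 : 0 < (Lg + ‖g‖ - ∫ ω, g' ω ∂μM) / 2 := by linarith
        have := key _ hε2
        linarith
      rw [hint μM hμprob] at h9
      linarith
    have hup : Lf ≤ ∫ ω, f ω ∂μM := oneside f Lf hLt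
    have hdown : -Lf ≤ ∫ ω, (-f) ω ∂μM := by
      refine oneside (-f) (-Lf) ?_
      refine Tendsto.congr (fun p => ?_) hLt.neg
      rw [← integral_neg]
      rfl
    have hneg : ∫ ω, (-f) ω ∂μM = -∫ ω, f ω ∂μM := by
      rw [← integral_neg]
      rfl
    rw [hneg] at hdown
    have hLfeq : Lf = ∫ ω, f ω ∂μM := le_antisymm hup (by linarith)
    have : (μP : Measure (EuclideanSpace ℝ (Fin d))) = μM := rfl
    rw [this, ← hLfeq]
    exact hLt
  -- conclusion
  refine ⟨(x, μP), ⟨hxB, hμsupp, ⟨νM, hνleμ, hνmass, hνtube⟩⟩, ?_⟩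
  have hprod : Tendsto (fun p : (EuclideanSpace ℝ (Fin d)) ×
      ProbabilityMeasure (EuclideanSpace ℝ (Fin d)) => (p.1, p.2)) (𝒰 : Filter ((EuclideanSpace ℝ (Fin d)) × ProbabilityMeasure (EuclideanSpace ℝ (Fin d))))
      (𝓝 (x, μP)) := hxt'.prodMk_nhds hconv
  have hid : Tendsto id (𝒰 : Filter ((EuclideanSpace ℝ (Fin d)) × ProbabilityMeasure (EuclideanSpace ℝ (Fin d)))) (𝓝 (x, μP)) := hprod
  rwa [Filter.tendsto_id'] at hid
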